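/- For 0 < θ < π/2 there is a constant C > 0 (depending on θ) such that the Mellin transform of m_{±θ}(λ) = exp(−e^{±iθ}λ) − exp(−λ) satisfies |[ℳ m_{±θ}](u)| ≤ C (1 + |u|)^{1/2} exp((θ − π/2)|u|) for all u ∈ ℝ. -/

import Mathlib

open MeasureTheory Complex Real Set Filter Topology

-- ‖exp z − 1‖ ≤ ‖z‖ e^{‖z‖}
lemma norm_cexp_sub_one_le (z : ℂ) : ‖Complex.exp z - 1‖ ≤ ‖z‖ * Real.exp ‖z‖ := by
  have key : ∀ x ∈ Set.Icc (0:ℝ) 1, HasDerivWithinAt (fun t : ℝ => Complex.exp (t • z))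
      (Complex.exp ((x:ℝ) • z) * z) (Set.Icc 0 1) x := by
    intro x _
    have h1 : HasDerivAt (fun t : ℝ => t • z) ((1:ℝ) • z) x := (hasDerivAt_id x).smul_const z
    have h2 := h1.cexp
    simpa using h2.hasDerivWithinAt
  have bd : ∀ x ∈ Set.Icc (0:ℝ) 1, ‖Complex.exp ((x:ℝ) • z) * z‖ ≤ Real.exp ‖z‖ * ‖z‖ := by
    intro x hx
    rw [norm_mul]
    have : ‖Complex.exp ((x:ℝ) • z)‖ ≤ Real.exp ‖z‖ := by
      rw [Complex.norm_exp]
      apply Real.exp_le_exp.2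
      have : ((x:ℝ) • z).re = x * z.re := by simp [Complex.smul_re]
      rw [this]
      calc x * z.re ≤ x * |z.re| := by
            exact mul_le_mul_of_nonneg_left (le_abs_self _) hx.1
        _ ≤ 1 * |z.re| := by
            exact mul_le_mul_of_nonneg_right hx.2 (abs_nonneg _)
        _ ≤ ‖z‖ := by rw [one_mul]; exact Complex.abs_re_le_norm z
    exact mul_le_mul_of_nonneg_right this (norm_nonneg _)
  have := (convex_Icc (0:ℝ) 1).norm_image_sub_le_of_norm_hasDerivWithin_le key bd
    (Set.left_mem_Icc.2 zero_le_one) (Set.right_mem_Icc.2 zero_le_one)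
  simpa [mul_comm] using this

-- |e^x − 1| ≤ |x| e^{|x|}
lemma abs_exp_sub_one_le' (x : ℝ) : |Real.exp x - 1| ≤ |x| * Real.exp |x| := by
  have h := norm_cexp_sub_one_le (x : ℂ)
  have h2 : ((Real.exp x - 1 : ℝ) : ℂ) = Complex.exp (x:ℂ) - 1 := by push_cast; ring
  calc |Real.exp x - 1| = ‖((Real.exp x - 1 : ℝ) : ℂ)‖ := (Complex.norm_real _).symm
    _ = ‖Complex.exp (x:ℂ) - 1‖ := by rw [h2]
    _ ≤ ‖(x:ℂ)‖ * Real.exp ‖(x:ℂ)‖ := h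
    _ = |x| * Real.exp |x| := by rw [Complex.norm_real]; rfl

lemma norm_cpow_neg_I (u : ℝ) {l : ℝ} (hl : 0 < l) : ‖(l:ℂ) ^ (-(u:ℂ)*I)‖ = 1 := by
  rw [Complex.norm_cpow_eq_rpow_re_of_pos hl]
  simp

lemma contOn_cpow (u : ℝ) : ContinuousOn (fun l:ℝ => (l:ℂ)^(-(u:ℂ)*I)) (Set.Ioi 0) := by
  intro l hl
  have hs : (l:ℂ) ∈ Complex.slitPlane := Or.inl (by exact_mod_cast hl)
  exact ((continuousAt_cpow_const hs).comp
    Complex.continuous_ofReal.continuousAt).continuousWithinAt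

lemma integrable_of_exp_bound {f : ℝ → ℂ} (hf : ContinuousOn f (Set.Ioi 0)) {M c : ℝ}
    (hc : 0 < c) (hb : ∀ l ∈ Set.Ioi (0:ℝ), ‖f l‖ ≤ M * Real.exp (-c*l)) :
    IntegrableOn f (Set.Ioi 0) := by
  refine Integrable.mono' ((exp_neg_integrableOn_Ioi 0 hc).const_mul M)
    (hf.aestronglyMeasurable measurableSet_Ioi) ?_
  exact (ae_restrict_iff' measurableSet_Ioi).2 (Filter.Eventually.of_forall hb)

lemma norm_cexp_neg_mul (w : ℂ) (l : ℝ) : ‖Complex.exp (-w*l)‖ = Real.exp (-w.re * l) := by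
  rw [Complex.norm_exp]
  congr 1
  simp [Complex.mul_re]

lemma contOn_K (u : ℝ) (w : ℂ) :
    ContinuousOn (fun l:ℝ => (l:ℂ)^(-(u:ℂ)*I) * Complex.exp (-w*l)) (Set.Ioi 0) :=
  (contOn_cpow u).mul (Complex.continuous_exp.comp
    ((continuous_const.mul Complex.continuous_ofReal))).continuousOn

lemma integrableK (u : ℝ) {w : ℂ} (hw : 0 < w.re) :
    IntegrableOn (fun l:ℝ => (l:ℂ)^(-(u:ℂ)*I) * Complex.exp (-w*l)) (Set.Ioi 0) := by
  refine integrable_of_exp_bound (contOn_K u w) hw (M := 1) (fun l hl => ?_)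
  rw [norm_mul, norm_cpow_neg_I u hl, norm_cexp_neg_mul, one_mul]

lemma integrableK' (u : ℝ) {w : ℂ} (hw : 0 < w.re) :
    IntegrableOn (fun l:ℝ => (l:ℂ)^(-(u:ℂ)*I) * (-(l:ℂ) * Complex.exp (-w*l))) (Set.Ioi 0) := by
  have hc : 0 < w.re / 2 := by linarith
  refine integrable_of_exp_bound ((contOn_cpow u).mul (((continuous_ofReal.neg).mul
    (Complex.continuous_exp.comp ((continuous_const.mul Complex.continuous_ofReal)))).continuousOn))
    hc (M := 2 / w.re) (fun l hl => ?_)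
  have hl0 : (0:ℝ) < l := hl
  rw [norm_mul, norm_cpow_neg_I u hl, one_mul, norm_mul, norm_neg, norm_cexp_neg_mul]
  rw [Complex.norm_real, Real.norm_eq_abs, abs_of_pos hl0]
  -- l * exp (-w.re * l) ≤ (2/w.re) * exp (-(w.re/2) * l)
  have key : l * Real.exp (-(w.re/2) * l) ≤ 2 / w.re := by
    have h1 : w.re/2 * l ≤ Real.exp (w.re/2 * l) := by
      have := Real.add_one_le_exp (w.re/2 * l); linarith
    rw [show (-(w.re/2) * l) = -(w.re/2*l) by ring, Real.exp_neg]
    rw [le_div_iff₀ hw]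
    have h2 : 0 < Real.exp (w.re/2*l) := Real.exp_pos _
    calc l * (Real.exp (w.re/2*l))⁻¹ * w.re
        = 2 * ((w.re/2*l) / Real.exp (w.re/2*l)) := by field_simp
      _ ≤ 2 * 1 := by
          refine mul_le_mul_of_nonneg_left ?_ (by norm_num)
          rw [div_le_one h2]; exact h1
      _ = 2 := by norm_num
  calc l * Real.exp (-w.re * l)
      = (l * Real.exp (-(w.re/2) * l)) * Real.exp (-(w.re/2) * l) := by
        rw [mul_assoc, ← Real.exp_add]; ring_nf
    _ ≤ (2 / w.re) * Real.exp (-(w.re/2) * l) := by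
        exact mul_le_mul_of_nonneg_right key (Real.exp_pos _).le

lemma G_integrand_norm (u : ℝ) (w : ℂ) {l : ℝ} (hl : 0 < l) :
    ‖(Complex.exp (-w*l) - Complex.exp (-l)) * (l:ℂ)^(-(u:ℂ)*I) / l‖
      = ‖Complex.exp (-w*l) - Complex.exp (-l)‖ / l := by
  rw [norm_div, norm_mul, norm_cpow_neg_I u hl, mul_one, Complex.norm_real,
    Real.norm_eq_abs, abs_of_pos hl]

lemma G_norm_bound (u : ℝ) {w : ℂ} (hw : 0 < w.re) : ∀ l ∈ Set.Ioi (0:ℝ),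
    ‖(Complex.exp (-w*l) - Complex.exp (-l)) * (l:ℂ)^(-(u:ℂ)*I) / l‖
      ≤ (‖1-w‖ * Real.exp ‖1-w‖ * Real.exp 1 + 2) * Real.exp (-(min w.re 1) * l) := by
  intro l hl
  have hl0 : (0:ℝ) < l := hl
  set c : ℝ := min w.re 1 with hc
  have hc0 : 0 < c := lt_min hw one_pos
  have hc1 : c ≤ 1 := min_le_right _ _
  set M₁ : ℝ := ‖1-w‖ * Real.exp ‖1-w‖ with hM₁
  have hM₁0 : 0 ≤ M₁ := mul_nonneg (norm_nonneg _) (Real.exp_pos _).le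
  rw [G_integrand_norm u w hl0]
  rcases le_or_gt l 1 with h1 | h1
  · -- small l : factor
    have factor : Complex.exp (-w*l) - Complex.exp (-l)
        = Complex.exp (-l) * (Complex.exp ((1-w)*l) - 1) := by
      rw [mul_sub, mul_one, ← Complex.exp_add]
      congr 1; ring
    have hn : ‖Complex.exp (-w*l) - Complex.exp (-l)‖ ≤ M₁ * l := by
      rw [factor, norm_mul]
      have e1 : ‖Complex.exp (-(l:ℂ))‖ ≤ 1 := by
        have := norm_cexp_neg_mul 1 l
        simp only [one_mul, Complex.one_re] at this
        rw [show (-(l:ℂ)) = -(1:ℂ)*l by ring, this]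
        exact Real.exp_le_one_iff.2 (by linarith)
      have e2 : ‖Complex.exp ((1-w)*l) - 1‖ ≤ M₁ * l := by
        refine (norm_cexp_sub_one_le _).trans ?_
        have hnl : ‖(1-w)*(l:ℂ)‖ = ‖1-w‖ * l := by
          rw [norm_mul, Complex.norm_real, Real.norm_eq_abs, abs_of_pos hl0]
        rw [hnl]
        have : Real.exp (‖1-w‖ * l) ≤ Real.exp ‖1-w‖ := by
          apply Real.exp_le_exp.2
          calc ‖1-w‖ * l ≤ ‖1-w‖ * 1 := mul_le_mul_of_nonneg_left h1 (norm_nonneg _)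
            _ = ‖1-w‖ := mul_one _
        calc ‖1-w‖ * l * Real.exp (‖1-w‖*l) ≤ ‖1-w‖ * l * Real.exp ‖1-w‖ := by
              exact mul_le_mul_of_nonneg_left this (by positivity)
          _ = M₁ * l := by ring
      calc ‖Complex.exp (-(l:ℂ))‖ * ‖Complex.exp ((1-w)*l) - 1‖ ≤ 1 * (M₁ * l) := by
            exact mul_le_mul e1 e2 (norm_nonneg _) one_pos.le
        _ = M₁ * l := one_mul _
    have : ‖Complex.exp (-w*l) - Complex.exp (-l)‖ / l ≤ M₁ := by
      rw [div_le_iff₀ hl0]; exact hn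
    refine this.trans ?_
    have he : Real.exp (-1 : ℝ) ≤ Real.exp (-c*l) := by
      apply Real.exp_le_exp.2
      have : c * l ≤ 1 := by
        calc c * l ≤ 1 * 1 := mul_le_mul (by linarith) h1 hl0.le one_pos.le
          _ = 1 := one_mul _
      linarith
    calc M₁ = (M₁ * Real.exp 1) * Real.exp (-1:ℝ) := by
          rw [mul_assoc, ← Real.exp_add]; norm_num
      _ ≤ (M₁ * Real.exp 1) * Real.exp (-c*l) := by
          exact mul_le_mul_of_nonneg_left he (by positivity)
      _ ≤ (M₁ * Real.exp 1 + 2) * Real.exp (-c*l) := by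
          have : (0:ℝ) ≤ Real.exp (-c*l) := (Real.exp_pos _).le
          nlinarith
  · -- large l
    have hn : ‖Complex.exp (-w*l) - Complex.exp (-l)‖ ≤ 2 * Real.exp (-c*l) := by
      refine (norm_sub_le _ _).trans ?_
      have e1 : ‖Complex.exp (-w*(l:ℂ))‖ ≤ Real.exp (-c*l) := by
        rw [norm_cexp_neg_mul]
        apply Real.exp_le_exp.2
        have : c ≤ w.re := min_le_left _ _
        nlinarith
      have e2 : ‖Complex.exp (-(l:ℂ))‖ ≤ Real.exp (-c*l) := by
        have := norm_cexp_neg_mul 1 l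
        simp only [one_mul, Complex.one_re] at this
        rw [show (-(l:ℂ)) = -(1:ℂ)*l by ring, this]
        apply Real.exp_le_exp.2; nlinarith
      linarith
    have : ‖Complex.exp (-w*l) - Complex.exp (-l)‖ / l ≤ 2 * Real.exp (-c*l) := by
      rw [div_le_iff₀ hl0]
      calc ‖Complex.exp (-w*l) - Complex.exp (-l)‖ ≤ 2 * Real.exp (-c*l) := hn
        _ = 2 * Real.exp (-c*l) * 1 := (mul_one _).symm
        _ ≤ 2 * Real.exp (-c*l) * l := by
            exact mul_le_mul_of_nonneg_left h1.le (by positivity)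
    refine this.trans ?_
    have h2 : (0:ℝ) ≤ Real.exp (-c*l) := (Real.exp_pos _).le
    have h3 : 0 ≤ M₁ * Real.exp 1 := by positivity
    nlinarith

lemma contOn_G (u : ℝ) (w : ℂ) :
    ContinuousOn (fun l:ℝ => (Complex.exp (-w*l) - Complex.exp (-l)) * (l:ℂ)^(-(u:ℂ)*I) / l)
      (Set.Ioi 0) := by
  apply ContinuousOn.div
  · exact (((Complex.continuous_exp.comp (continuous_const.mul Complex.continuous_ofReal)).sub
      (Complex.continuous_exp.comp Complex.continuous_ofReal.neg)).continuousOn).mul (contOn_cpow u)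
  · exact Complex.continuous_ofReal.continuousOn
  · intro l hl
    exact_mod_cast (ne_of_gt (show (0:ℝ) < l from hl))

lemma integrableG (u : ℝ) {w : ℂ} (hw : 0 < w.re) :
    IntegrableOn (fun l:ℝ => (Complex.exp (-w*l) - Complex.exp (-l)) * (l:ℂ)^(-(u:ℂ)*I) / l)
      (Set.Ioi 0) :=
  integrable_of_exp_bound (contOn_G u w) (lt_min hw one_pos) (G_norm_bound u hw)

lemma linexp_le {c : ℝ} (hc : 0 < c) {l : ℝ} (hl : 0 ≤ l) :
    l * Real.exp (-c*l) ≤ (2/c) * Real.exp (-(c/2)*l) := by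
  have h1 : c/2 * l ≤ Real.exp (c/2 * l) := by
    have := Real.add_one_le_exp (c/2 * l); linarith
  have h2 : 0 < Real.exp (c/2*l) := Real.exp_pos _
  have key : l * Real.exp (-(c/2) * l) ≤ 2 / c := by
    rw [show (-(c/2) * l) = -(c/2*l) by ring, Real.exp_neg, le_div_iff₀ hc]
    calc l * (Real.exp (c/2*l))⁻¹ * c = 2 * ((c/2*l) / Real.exp (c/2*l)) := by
          field_simp
      _ ≤ 2 * 1 := by
          refine mul_le_mul_of_nonneg_left ?_ (by norm_num)
          rw [div_le_one h2]; exact h1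
      _ = 2 := by norm_num
  calc l * Real.exp (-c * l) = (l * Real.exp (-(c/2) * l)) * Real.exp (-(c/2) * l) := by
        rw [mul_assoc, ← Real.exp_add]; ring_nf
    _ ≤ (2/c) * Real.exp (-(c/2) * l) := mul_le_mul_of_nonneg_right key (Real.exp_pos _).le

lemma integrable_linexp {c : ℝ} (hc : 0 < c) :
    IntegrableOn (fun l:ℝ => l * Real.exp (-c*l)) (Set.Ioi 0) := by
  have hc2 : 0 < c/2 := by linarith
  refine Integrable.mono' ((exp_neg_integrableOn_Ioi 0 hc2).const_mul (2/c))
    ((continuous_id.mul (Real.continuous_exp.comp (continuous_const.mul continuous_id))).aestronglyMeasurable)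
    ?_
  refine (ae_restrict_iff' measurableSet_Ioi).2 (Filter.Eventually.of_forall (fun l hl => ?_))
  have hl0 : (0:ℝ) < l := hl
  rw [Real.norm_eq_abs, _root_.abs_of_nonneg (mul_nonneg hl0.le (Real.exp_pos _).le)]
  exact linexp_le hc hl0.le

lemma re_lower {w₀ w : ℂ} (hw : w ∈ Metric.ball w₀ (w₀.re/2)) : w₀.re/2 ≤ w.re := by
  have h1 : ‖w - w₀‖ < w₀.re/2 := by
    rw [← dist_eq_norm]; exact hw
  have h2 : |(w - w₀).re| ≤ ‖w - w₀‖ := Complex.abs_re_le_norm _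
  have : (w - w₀).re = w.re - w₀.re := by simp [Complex.sub_re]
  rw [this] at h2
  have := abs_le.1 h2
  linarith [this.1]

lemma hasDerivK (u : ℝ) {w₀ : ℂ} (hw : 0 < w₀.re) :
    HasDerivAt (fun w : ℂ => ∫ l in Set.Ioi (0:ℝ), (l:ℂ)^(-(u:ℂ)*I) * Complex.exp (-w*l))
      (∫ l in Set.Ioi (0:ℝ), (l:ℂ)^(-(u:ℂ)*I) * (-(l:ℂ) * Complex.exp (-w₀*l))) w₀ := by
  have hc2 : 0 < w₀.re/2 := by linarith
  refine (hasDerivAt_integral_of_dominated_loc_of_deriv_le (F := fun w (l:ℝ) =>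
      (l:ℂ)^(-(u:ℂ)*I) * Complex.exp (-w*l))
      (F' := fun w (l:ℝ) => (l:ℂ)^(-(u:ℂ)*I) * (-(l:ℂ) * Complex.exp (-w*l)))
      (bound := fun l => l * Real.exp (-(w₀.re/2)*l)) (Metric.ball_mem_nhds w₀ hc2) ?_ ?_ ?_ ?_ ?_ ?_).2
  · exact Filter.Eventually.of_forall (fun w =>
      (contOn_K u w).aestronglyMeasurable measurableSet_Ioi)
  · exact integrableK u hw
  · exact ((contOn_cpow u).mul ((continuous_ofReal.neg.mul
      (Complex.continuous_exp.comp (continuous_const.mul Complex.continuous_ofReal))).continuousOn)).aestronglyMeasurable measurableSet_Ioi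
  · refine (ae_restrict_iff' measurableSet_Ioi).2 (Filter.Eventually.of_forall (fun l hl w hwb => ?_))
    have hl0 : (0:ℝ) < l := hl
    rw [norm_mul, norm_cpow_neg_I u hl0, one_mul, norm_mul, norm_neg, norm_cexp_neg_mul,
      Complex.norm_real, Real.norm_eq_abs, abs_of_pos hl0]
    refine mul_le_mul_of_nonneg_left (Real.exp_le_exp.2 ?_) hl0.le
    have := re_lower hwb
    nlinarith
  · exact integrable_linexp hc2
  · refine (ae_restrict_iff' measurableSet_Ioi).2 (Filter.Eventually.of_forall (fun l hl w _ => ?_))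
    have base : HasDerivAt (fun w : ℂ => -w * (l:ℂ)) (-1 * l) w :=
      (hasDerivAt_id w).neg.mul_const (l:ℂ)
    have := (base.cexp).const_mul ((l:ℂ)^(-(u:ℂ)*I))
    refine this.congr_deriv ?_
    ring

lemma hasDerivG (u : ℝ) {w₀ : ℂ} (hw : 0 < w₀.re) :
    HasDerivAt (fun w : ℂ => ∫ l in Set.Ioi (0:ℝ),
        (Complex.exp (-w*l) - Complex.exp (-l)) * (l:ℂ)^(-(u:ℂ)*I) / l)
      (∫ l in Set.Ioi (0:ℝ), -(Complex.exp (-w₀*l) * (l:ℂ)^(-(u:ℂ)*I))) w₀ := by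
  have hc2 : 0 < w₀.re/2 := by linarith
  refine (hasDerivAt_integral_of_dominated_loc_of_deriv_le (F := fun w (l:ℝ) =>
      (Complex.exp (-w*l) - Complex.exp (-l)) * (l:ℂ)^(-(u:ℂ)*I) / l)
      (F' := fun w (l:ℝ) => -(Complex.exp (-w*l) * (l:ℂ)^(-(u:ℂ)*I)))
      (bound := fun l => Real.exp (-(w₀.re/2)*l)) (Metric.ball_mem_nhds w₀ hc2) ?_ ?_ ?_ ?_ ?_ ?_).2
  · exact Filter.Eventually.of_forall (fun w =>
      (contOn_G u w).aestronglyMeasurable measurableSet_Ioi)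
  · exact integrableG u hw
  · exact (((Complex.continuous_exp.comp (continuous_const.mul
      Complex.continuous_ofReal)).continuousOn.mul (contOn_cpow u)).neg).aestronglyMeasurable
      measurableSet_Ioi
  · refine (ae_restrict_iff' measurableSet_Ioi).2 (Filter.Eventually.of_forall (fun l hl w hwb => ?_))
    have hl0 : (0:ℝ) < l := hl
    rw [norm_neg, norm_mul, norm_cpow_neg_I u hl0, mul_one, norm_cexp_neg_mul]
    refine Real.exp_le_exp.2 ?_
    have := re_lower hwb
    nlinarith
  · exact exp_neg_integrableOn_Ioi 0 hc2
  · refine (ae_restrict_iff' measurableSet_Ioi).2 (Filter.Eventually.of_forall (fun l hl w _ => ?_))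
    have hl0 : (0:ℝ) < l := hl
    have hlne : (l:ℂ) ≠ 0 := by exact_mod_cast hl0.ne'
    have base : HasDerivAt (fun w : ℂ => -w * (l:ℂ)) (-1 * l) w :=
      (hasDerivAt_id w).neg.mul_const (l:ℂ)
    have h1 : HasDerivAt (fun w : ℂ => Complex.exp (-w*l)) (Complex.exp (-w*l) * (-1*l)) w :=
      base.cexp
    have h2 : HasDerivAt (fun w : ℂ => Complex.exp (-w*l) - Complex.exp (-l))
        (Complex.exp (-w*l) * (-1*l)) w := h1.sub_const _
    have h3 := (h2.mul_const ((l:ℂ)^(-(u:ℂ)*I))).div_const (l:ℂ)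
    refine h3.congr_deriv ?_
    field_simp

lemma K_eq (u : ℝ) {w : ℂ} (hw : 0 < w.re) :
    ∫ l in Set.Ioi (0:ℝ), (l:ℂ)^(-(u:ℂ)*I) * Complex.exp (-w*l)
      = w ^ (-(1 - (u:ℂ)*I)) * Complex.Gamma (1 - (u:ℂ)*I) := by
  set b : ℂ := 1 - (u:ℂ)*I with hb
  have hbre : 0 < b.re := by simp [hb]
  set f : ℂ → ℂ := fun w => ∫ l in Set.Ioi (0:ℝ), (l:ℂ)^(-(u:ℂ)*I) * Complex.exp (-w*l) with hf'
  set g : ℂ → ℂ := fun w => w ^ (-b) * Complex.Gamma b with hg'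
  set U : Set ℂ := {z | 0 < z.re} with hU
  have hUo : IsOpen U := isOpen_lt continuous_const Complex.continuous_re
  have hUc : IsPreconnected U := (convex_halfSpace_re_gt 0).isPreconnected
  have hfd : DifferentiableOn ℂ f U :=
    fun z hz => ((hasDerivK u hz).differentiableAt).differentiableWithinAt
  have hfa : AnalyticOnNhd ℂ f U := hfd.analyticOnNhd hUo
  have hga : AnalyticOnNhd ℂ g U := by
    refine DifferentiableOn.analyticOnNhd (fun z hz => ?_) hUo
    exact ((differentiableAt_id.cpow (differentiableAt_const (-b))
      (Or.inl hz)).mul_const (Complex.Gamma b)).differentiableWithinAt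
  have h2 : ∀ r : ℝ, 0 < r → f r = g r := by
    intro r hr
    have hint := integral_cpow_mul_exp_neg_mul_Ioi hbre hr
    have e1 : f r = ∫ t in Set.Ioi (0:ℝ), (t:ℂ) ^ (b - 1) * Complex.exp (-((r:ℂ) * t)) := by
      refine setIntegral_congr_fun measurableSet_Ioi (fun l hl => ?_)
      have hb1 : (b - 1 : ℂ) = -(u:ℂ)*I := by rw [hb]; ring
      rw [hb1, neg_mul]
      rw [neg_mul]
    rw [e1, hint, hg']
    have harg : ((r:ℂ)).arg ≠ π := by
      rw [Complex.arg_ofReal_of_nonneg hr.le]; exact pi_ne_zero.symm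
    have : ((1:ℂ)/r) ^ b = (r:ℂ) ^ (-b) := by
      rw [one_div, Complex.inv_cpow _ _ harg, ← Complex.cpow_neg]
    rw [this]
  have hseq : Filter.Tendsto (fun n : ℕ => ((1 + 1/(n+1) : ℝ) : ℂ)) Filter.atTop (𝓝[≠] 1) := by
    rw [tendsto_nhdsWithin_iff]
    constructor
    · have : Filter.Tendsto (fun n : ℕ => (1 + 1/(n+1) : ℝ)) Filter.atTop (𝓝 1) := by
        have h0 : Filter.Tendsto (fun n : ℕ => (1/(n+1) : ℝ)) Filter.atTop (𝓝 0) :=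
          tendsto_one_div_add_atTop_nhds_zero_nat
        simpa using tendsto_const_nhds.add h0
      have h3 := (Complex.continuous_ofReal.tendsto 1).comp this
      exact h3
    · refine Filter.Eventually.of_forall (fun n => ?_)
      simp only [Set.mem_compl_iff, Set.mem_singleton_iff]
      intro hcon
      have : (1 + 1/(n+1) : ℝ) = 1 := by exact_mod_cast hcon
      have hpos : (0:ℝ) < 1/(n+1) := by positivity
      linarith
  have hfreq : ∃ᶠ z in 𝓝[≠] (1:ℂ), f z = g z :=
    hseq.frequently (Filter.Eventually.of_forall (fun n => h2 _ (by positivity))).frequently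
  have heq := hfa.eqOn_of_preconnected_of_frequently_eq hga hUc
    (show (1:ℂ) ∈ U by simp [hU]) hfreq
  exact heq hw

lemma G_eq (u : ℝ) (hu : u ≠ 0) {a : ℂ} (ha : 0 < a.re) :
    ∫ l in Set.Ioi (0:ℝ), (Complex.exp (-a*l) - Complex.exp (-l)) * (l:ℂ)^(-(u:ℂ)*I) / l
      = (a ^ ((u:ℂ)*I) - 1) * Complex.Gamma (-(u:ℂ)*I) := by
  have huI : -(u:ℂ)*I ≠ 0 := by
    simp only [ne_eq, neg_mul, neg_eq_zero, mul_eq_zero, Complex.I_ne_zero, or_false]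
    exact_mod_cast hu
  set G : ℂ → ℂ := fun w => ∫ l in Set.Ioi (0:ℝ),
    (Complex.exp (-w*l) - Complex.exp (-l)) * (l:ℂ)^(-(u:ℂ)*I) / l with hG
  set H : ℂ → ℂ := fun w => (w ^ ((u:ℂ)*I) - 1) * Complex.Gamma (-(u:ℂ)*I) with hH
  set U : Set ℂ := {z | 0 < z.re} with hU
  set d : ℂ → ℂ := fun z => -(z ^ (-(1 - (u:ℂ)*I)) * Complex.Gamma (1 - (u:ℂ)*I)) with hd
  have hGd : ∀ z ∈ U, HasDerivAt G (d z) z := by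
    intro z hz
    have h1 := hasDerivG u hz
    have h2 : (∫ l in Set.Ioi (0:ℝ), -(Complex.exp (-z*l) * (l:ℂ)^(-(u:ℂ)*I))) = d z := by
      rw [integral_neg]
      have : (∫ l in Set.Ioi (0:ℝ), Complex.exp (-z*l) * (l:ℂ)^(-(u:ℂ)*I))
          = ∫ l in Set.Ioi (0:ℝ), (l:ℂ)^(-(u:ℂ)*I) * Complex.exp (-z*l) := by
        refine setIntegral_congr_fun measurableSet_Ioi (fun l _ => ?_)
        ring
      rw [this, K_eq u hz, hd]
    rw [← h2]
    exact h1
  have hHd : ∀ z ∈ U, HasDerivAt H (d z) z := by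
    intro z hz
    have hslit : z ∈ Complex.slitPlane := Or.inl hz
    have h1 : HasDerivAt (fun w : ℂ => w ^ ((u:ℂ)*I))
        (((u:ℂ)*I) * z ^ ((u:ℂ)*I - 1) * 1) z :=
      (hasDerivAt_id z).cpow_const hslit
    have h2 := (h1.sub_const 1).mul_const (Complex.Gamma (-(u:ℂ)*I))
    refine h2.congr_deriv ?_
    rw [hd]
    have e1 : Complex.Gamma (1 - (u:ℂ)*I) = (-(u:ℂ)*I) * Complex.Gamma (-(u:ℂ)*I) := by
      have := Complex.Gamma_add_one (-(u:ℂ)*I) huI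
      rw [← this]
      congr 1
      ring
    have e2 : (-(1 - (u:ℂ)*I)) = (u:ℂ)*I - 1 := by ring
    rw [e2, e1]
    ring
  have hconv : Convex ℝ U := convex_halfSpace_re_gt 0
  have h1U : (1:ℂ) ∈ U := by simp [hU]
  have haU : a ∈ U := ha
  have hderiv : ∀ z ∈ U, HasFDerivWithinAt (fun w => G w - H w)
      ((1 : ℂ →L[ℂ] ℂ).smulRight (0:ℂ)) U z := by
    intro z hz
    have h0 : HasFDerivWithinAt (fun w => G w - H w)
        ((1 : ℂ →L[ℂ] ℂ).smulRight (d z - d z)) U z :=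
      HasFDerivAt.hasFDerivWithinAt ((hGd z hz).sub (hHd z hz)).hasFDerivAt
    convert h0 using 2
    simp
  have hbd : ∀ z ∈ U, ‖(1 : ℂ →L[ℂ] ℂ).smulRight (0:ℂ)‖ ≤ 0 := by
    intro z _
    have : (1 : ℂ →L[ℂ] ℂ).smulRight (0:ℂ) = 0 := by
      ext1; simp
    rw [this, norm_zero]
  have hMVT := hconv.norm_image_sub_le_of_norm_hasFDerivWithin_le hderiv hbd h1U haU
  rw [zero_mul] at hMVT
  have hDa : G a - H a = G 1 - H 1 := by
    have := norm_le_zero_iff.1 hMVT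
    have h := sub_eq_zero.1 this
    exact h
  have hG1 : G (1:ℂ) = 0 := by
    rw [hG]
    simp only [neg_mul, one_mul]
    simp [sub_self]
  have hH1 : H (1:ℂ) = 0 := by
    rw [hH]; simp
  have : G a = H a := by
    have := hDa
    rw [hG1, hH1] at this
    linear_combination this
  exact this

lemma normSq_Gamma (u : ℝ) (hu : u ≠ 0) :
    ‖Complex.Gamma (-(u:ℂ)*I)‖^2 = π / (u * Real.sinh (π * u)) := by
  have huC : (u:ℂ) ≠ 0 := by exact_mod_cast hu
  have huI : (u:ℂ)*I ≠ 0 := mul_ne_zero huC Complex.I_ne_zero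
  have h1 := Complex.Gamma_mul_Gamma_one_sub (-(u:ℂ)*I)
  have h2 : Complex.Gamma (1 - (-(u:ℂ)*I)) = ((u:ℂ)*I) * Complex.Gamma ((u:ℂ)*I) := by
    have := Complex.Gamma_add_one ((u:ℂ)*I) huI
    rw [← this]
    congr 1
    ring
  have h3 : Complex.sin ((π:ℂ) * (-(u:ℂ)*I)) = -(Real.sinh (π*u) : ℂ) * I := by
    have e : (π:ℂ) * (-(u:ℂ)*I) = ((-(π*u) : ℝ):ℂ) * I := by push_cast; ring
    rw [e, Complex.sin_mul_I, ← Complex.ofReal_sinh]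
    push_cast [Real.sinh_neg]
    ring
  have h4 : Complex.Gamma ((u:ℂ)*I) = (starRingEnd ℂ) (Complex.Gamma (-(u:ℂ)*I)) := by
    have := Complex.Gamma_conj (-(u:ℂ)*I)
    rw [show (starRingEnd ℂ) (-(u:ℂ)*I) = (u:ℂ)*I by simp] at this
    rw [this]
  have hsinh : Real.sinh (π*u) ≠ 0 := by
    intro hcon
    have := Real.sinh_eq_zero.1 hcon
    have hπu : π * u ≠ 0 := mul_ne_zero Real.pi_ne_zero hu
    exact hπu this
  have hsC : (Real.sinh (π*u) : ℂ) ≠ 0 := by exact_mod_cast hsinh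
  -- combine
  rw [h2, h3] at h1
  -- h1 : Γ(−uI) * (uI * Γ(uI)) = π / (-sinh * I)
  have h5 : Complex.Gamma (-(u:ℂ)*I) * (starRingEnd ℂ) (Complex.Gamma (-(u:ℂ)*I))
      = (π:ℂ) / ((u:ℂ) * (Real.sinh (π*u) : ℂ)) := by
    rw [← h4]
    have hden : (-(Real.sinh (π*u) : ℂ) * I) ≠ 0 :=
      mul_ne_zero (neg_ne_zero.2 hsC) Complex.I_ne_zero
    rw [eq_div_iff (mul_ne_zero huC hsC)]
    have h1' : Complex.Gamma (-(u:ℂ)*I) * (((u:ℂ)*I) * Complex.Gamma ((u:ℂ)*I))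
        * (-(Real.sinh (π*u):ℂ) * I) = (π:ℂ) := by
      rw [h1, div_mul_cancel₀ _ hden]
    linear_combination h1' + (Complex.Gamma (-(u:ℂ)*I) * Complex.Gamma ((u:ℂ)*I) * (u:ℂ)
      * (Real.sinh (π*u):ℂ)) * Complex.I_sq
  have h6 : Complex.Gamma (-(u:ℂ)*I) * (starRingEnd ℂ) (Complex.Gamma (-(u:ℂ)*I))
      = ((‖Complex.Gamma (-(u:ℂ)*I)‖^2 : ℝ) : ℂ) := by
    rw [Complex.mul_conj]
    norm_cast
    rw [← Complex.sq_norm]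
  rw [h6] at h5
  have h7 : ((‖Complex.Gamma (-(u:ℂ)*I)‖^2 : ℝ) : ℂ) = ((π / (u * Real.sinh (π*u)) : ℝ) : ℂ) := by
    rw [h5]
    push_cast
    ring
  exact_mod_cast h7

lemma sinh_lower {x : ℝ} (hx : 0 < x) : x * Real.exp x ≤ Real.sinh x * (1 + 2*x) := by
  have h1 : 1 + 2*x ≤ Real.exp (2*x) := by
    have := Real.add_one_le_exp (2*x); linarith
  have he : Real.exp (2*x) = Real.exp x * Real.exp x := by
    rw [← Real.exp_add]; ring_nf
  have hinv : Real.exp (-x) * Real.exp x = 1 := by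
    rw [← Real.exp_add]; simp
  have hs : Real.sinh x = (Real.exp x - Real.exp (-x))/2 := Real.sinh_eq x
  have hex : 0 < Real.exp x := Real.exp_pos x
  have hex' : 0 < Real.exp (-x) := Real.exp_pos (-x)
  nlinarith [mul_pos hex hex']

lemma gammaSq_bound (u : ℝ) (hu : u ≠ 0) :
    ‖Complex.Gamma (-(u:ℂ)*I)‖^2 ≤ (1 + 2*(π*|u|)) / (|u|^2 * Real.exp (π*|u|)) := by
  have ht : 0 < |u| := abs_pos.2 hu
  have heq : u * Real.sinh (π * u) = |u| * Real.sinh (π * |u|) := by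
    rcases abs_cases u with ⟨h, _⟩ | ⟨h, _⟩
    · rw [h]
    · rw [h]
      rw [show π * -u = -(π*u) by ring, Real.sinh_neg]
      ring
  rw [normSq_Gamma u hu, heq]
  set x := π * |u| with hx
  have hx0 : 0 < x := mul_pos Real.pi_pos ht
  have hs0 : 0 < Real.sinh x := by
    rw [Real.sinh_eq]
    have h1 : Real.exp (-x) < Real.exp x := Real.exp_lt_exp.2 (by linarith)
    linarith
  have key := sinh_lower hx0
  rw [div_le_div_iff₀ (by positivity) (by positivity)]
  calc π * (|u|^2 * Real.exp x) = |u| * (x * Real.exp x) := by rw [hx]; ring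
    _ ≤ |u| * (Real.sinh x * (1+2*x)) := by
        exact mul_le_mul_of_nonneg_left key ht.le
    _ = |u| * Real.sinh x * (1+2*x) := by ring
    _ = (1 + 2*x) * (|u| * Real.sinh x) := by ring

lemma main_bound (θ : ℝ) (hθ0 : 0 < θ) (hθ : θ < π/2) (ε : ℝ) (hε : ε = 1 ∨ ε = -1)
    (u : ℝ) (hu : u ≠ 0) :
    |Real.exp (-(ε*θ*u)) - 1| * ‖Complex.Gamma (-(u:ℂ)*I)‖ ≤
      (θ * Real.sqrt (2*π)) * (1+|u|)^((1:ℝ)/2) * Real.exp ((θ-π/2)*|u|) := by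
  set t := |u| with htdef
  have ht : 0 < t := abs_pos.2 hu
  have hπ : 0 < π := Real.pi_pos
  -- bound on the exponential difference
  have hA : |Real.exp (-(ε*θ*u)) - 1| ≤ θ * t * Real.exp (θ*t) := by
    have h0 := abs_exp_sub_one_le' (-(ε*θ*u))
    have habs : |(-(ε*θ*u))| = θ * t := by
      rw [abs_neg, abs_mul, abs_mul]
      rcases hε with h | h <;> rw [h] <;> simp [abs_of_pos hθ0, htdef] <;> ring
    rw [habs] at h0
    exact h0
  have hγ := gammaSq_bound u hu
  have hγ0 : 0 ≤ ‖Complex.Gamma (-(u:ℂ)*I)‖ := norm_nonneg _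
  have hA0 : 0 ≤ |Real.exp (-(ε*θ*u)) - 1| := abs_nonneg _
  -- squares
  have hRHS0 : 0 ≤ (θ * Real.sqrt (2*π)) * (1+t)^((1:ℝ)/2) * Real.exp ((θ-π/2)*t) := by
    positivity
  have hsq : (|Real.exp (-(ε*θ*u)) - 1| * ‖Complex.Gamma (-(u:ℂ)*I)‖)^2 ≤
      ((θ * Real.sqrt (2*π)) * (1+t)^((1:ℝ)/2) * Real.exp ((θ-π/2)*t))^2 := by
    have e1 : ((θ * Real.sqrt (2*π)) * (1+t)^((1:ℝ)/2) * Real.exp ((θ-π/2)*t))^2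
        = θ^2 * (2*π) * (1+t) * Real.exp ((2*θ-π)*t) := by
      have s1 : (Real.sqrt (2*π))^2 = 2*π := Real.sq_sqrt (by positivity)
      have s2 : ((1+t)^((1:ℝ)/2))^2 = 1+t := by
        rw [← Real.rpow_natCast ((1+t)^((1:ℝ)/2)) 2, ← Real.rpow_mul (by positivity)]
        norm_num
      have s3 : (Real.exp ((θ-π/2)*t))^2 = Real.exp ((2*θ-π)*t) := by
        rw [sq, ← Real.exp_add]; ring_nf
      calc ((θ * Real.sqrt (2*π)) * (1+t)^((1:ℝ)/2) * Real.exp ((θ-π/2)*t))^2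
          = θ^2 * (Real.sqrt (2*π))^2 * ((1+t)^((1:ℝ)/2))^2 * (Real.exp ((θ-π/2)*t))^2 := by
            ring
        _ = θ^2 * (2*π) * (1+t) * Real.exp ((2*θ-π)*t) := by rw [s1, s2, s3]
    rw [e1, mul_pow]
    calc |Real.exp (-(ε*θ*u)) - 1|^2 * ‖Complex.Gamma (-(u:ℂ)*I)‖^2
        ≤ (θ * t * Real.exp (θ*t))^2 * ((1 + 2*(π*t)) / (t^2 * Real.exp (π*t))) := by
          refine mul_le_mul ?_ hγ (by positivity) (by positivity)
          exact pow_le_pow_left₀ hA0 hA 2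
      _ = θ^2 * (1 + 2*(π*t)) * (Real.exp (θ*t)^2 / Real.exp (π*t)) := by
          field_simp
      _ = θ^2 * (1 + 2*(π*t)) * Real.exp ((2*θ-π)*t) := by
          congr 1
          rw [sq, ← Real.exp_add, ← Real.exp_sub]
          ring_nf
      _ ≤ θ^2 * (2*π*(1+t)) * Real.exp ((2*θ-π)*t) := by
          refine mul_le_mul_of_nonneg_right (mul_le_mul_of_nonneg_left ?_ (by positivity))
            (Real.exp_pos _).le
          nlinarith [Real.pi_gt_three]
      _ = θ^2 * (2*π) * (1+t) * Real.exp ((2*θ-π)*t) := by ring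
  have := Real.sqrt_le_sqrt hsq
  rwa [Real.sqrt_sq (by positivity), Real.sqrt_sq hRHS0] at this


/-- for `0 < θ < π/2` there exists `C > 0` such that the Mellin transform of
`m_{±θ}(λ) = e^{-e^{±iθ}λ} - e^{-λ}` satisfies
`|[ℳ m_{±θ}](u)| ≤ C (1+|u|)^{1/2} e^{(θ-π/2)|u|}` for all `u ∈ ℝ`. -/
theorem stmt9 (θ : ℝ) (hθ0 : 0 < θ) (hθ : θ < π / 2) (ε : ℝ) (hε : ε = 1 ∨ ε = -1) :
    ∃ C : ℝ, 0 < C ∧ ∀ u : ℝ,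
      ‖∫ l in Set.Ioi (0:ℝ),
          (Complex.exp (-(Complex.exp ((ε : ℂ) * (θ : ℂ) * Complex.I)) * (l : ℂ)) -
            Complex.exp (-(l : ℂ))) * (l : ℂ) ^ (-(u : ℂ) * Complex.I) / l‖ ≤
        C * (1 + |u|) ^ ((1 : ℝ) / 2) * Real.exp ((θ - π / 2) * |u|) := by
  have hπ : 0 < π := Real.pi_pos
  set a : ℂ := Complex.exp ((ε:ℂ)*(θ:ℂ)*I) with hadef
  have him : ((ε:ℂ)*(θ:ℂ)*I).im = ε*θ := by simp
  have hre0 : ((ε:ℂ)*(θ:ℂ)*I).re = 0 := by simp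
  have hεθ : |ε*θ| = θ := by
    rcases hε with h | h <;> rw [h] <;> simp [abs_of_pos hθ0]
  have hεθ1 : -π < ε*θ := by
    have := abs_le.1 hεθ.le; linarith [this.1]
  have hεθ2 : ε*θ ≤ π := by
    have := abs_le.1 hεθ.le; linarith [this.2]
  have ha : 0 < a.re := by
    rw [hadef, Complex.exp_re, hre0, him, Real.exp_zero, one_mul]
    apply Real.cos_pos_of_mem_Ioo
    constructor
    · have := abs_le.1 hεθ.le; linarith [this.1]
    · have := abs_le.1 hεθ.le; linarith [this.2]
  have hane : a ≠ 0 := Complex.exp_ne_zero _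
  have hcpow : ∀ u : ℝ, a ^ ((u:ℂ)*I) = ((Real.exp (-(ε*θ*u)) : ℝ) : ℂ) := by
    intro u
    have hlog : Complex.log a = (ε:ℂ)*(θ:ℂ)*I := by
      rw [hadef]
      exact Complex.log_exp (by rw [him]; linarith) (by rw [him]; exact hεθ2)
    have e : (ε:ℂ)*(θ:ℂ)*I*((u:ℂ)*I) = ((-(ε*θ*u) : ℝ):ℂ) := by
      push_cast
      linear_combination ((ε:ℂ)*(θ:ℂ)*(u:ℂ)) * Complex.I_sq
    rw [Complex.cpow_def_of_ne_zero hane, hlog, e]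
    exact (Complex.ofReal_exp _).symm
  -- crude uniform bound
  set M : ℝ := ‖1-a‖ * Real.exp ‖1-a‖ * Real.exp 1 + 2 with hM
  set c : ℝ := min a.re 1 with hcdef
  have hc : 0 < c := lt_min ha one_pos
  set I₀ : ℝ := ∫ l in Set.Ioi (0:ℝ), M * Real.exp (-c*l) with hI₀def
  have hI₀ : ∀ u : ℝ,
      ‖∫ l in Set.Ioi (0:ℝ), (Complex.exp (-a*l) - Complex.exp (-l)) * (l:ℂ)^(-(u:ℂ)*I) / l‖
        ≤ I₀ := by
    intro u
    refine (norm_integral_le_integral_norm _).trans ?_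
    exact setIntegral_mono_on ((integrableG u ha).norm)
      ((exp_neg_integrableOn_Ioi 0 hc).const_mul M) measurableSet_Ioi (G_norm_bound u ha)
  have hI₀0 : 0 ≤ I₀ := le_trans (norm_nonneg _) (hI₀ 0)
  have hs2π : 0 ≤ Real.sqrt (2*π) := Real.sqrt_nonneg _
  refine ⟨θ * Real.sqrt (2*π) + I₀ + 1, by positivity, fun u => ?_⟩
  set C : ℝ := θ * Real.sqrt (2*π) + I₀ + 1 with hC
  rcases eq_or_ne u 0 with rfl | hu
  · -- u = 0
    have hrhs : C * (1 + |(0:ℝ)|) ^ ((1:ℝ)/2) * Real.exp ((θ - π/2) * |(0:ℝ)|) = C := by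
      simp
    rw [hrhs]
    refine (hI₀ 0).trans ?_
    have : 0 ≤ θ * Real.sqrt (2*π) := by positivity
    linarith
  · -- u ≠ 0
    have hkey := G_eq u hu ha
    calc ‖∫ l in Set.Ioi (0:ℝ),
          (Complex.exp (-a * (l:ℂ)) - Complex.exp (-(l:ℂ))) * (l:ℂ) ^ (-(u:ℂ) * I) / l‖
        = ‖(a ^ ((u:ℂ)*I) - 1) * Complex.Gamma (-(u:ℂ)*I)‖ := by rw [hkey]
      _ = |Real.exp (-(ε*θ*u)) - 1| * ‖Complex.Gamma (-(u:ℂ)*I)‖ := by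
          rw [hcpow u, norm_mul]
          congr 1
          rw [show ((Real.exp (-(ε*θ*u)) : ℝ) : ℂ) - 1
            = ((Real.exp (-(ε*θ*u)) - 1 : ℝ) : ℂ) by push_cast; ring]
          rw [Complex.norm_real, Real.norm_eq_abs]
      _ ≤ (θ * Real.sqrt (2*π)) * (1+|u|)^((1:ℝ)/2) * Real.exp ((θ-π/2)*|u|) :=
          main_bound θ hθ0 hθ ε hε u hu
      _ ≤ C * (1+|u|)^((1:ℝ)/2) * Real.exp ((θ-π/2)*|u|) := by
          have h1 : θ * Real.sqrt (2*π) ≤ C := by rw [hC]; linarith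
          have h2 : (0:ℝ) ≤ (1+|u|)^((1:ℝ)/2) := by positivity
          have h3 : (0:ℝ) ≤ Real.exp ((θ-π/2)*|u|) := (Real.exp_pos _).le
          exact mul_le_mul_of_nonneg_right (mul_le_mul_of_nonneg_right h1 h2) h3
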